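/- Let J : ℝ → ℝ be continuous, nonnegative, compactly supported, with J(0) > 0 and ∫_ℝ J = 1, and let c ∈ ℝ. Then the minimizer of ν ↦ ∫_ℝ J(x) e^{-ν x} dx + c ν over ℝ is unique: if η(ν₀) = η(ν₁) = inf_ν η(ν) then ν₀ = ν₁. -/

import Mathlib

open MeasureTheory Real Filter Set

/-- For compactly supported `J` satisfying (J) and any `c`, the minimizer
of `η(ν) = ∫ J(x) e^{-ν x} dx + c ν` over `ℝ` is unique. -/
theorem stmt3 (J : ℝ → ℝ) (hJcont : Continuous J) (hJnonneg : ∀ x, 0 ≤ J x)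
    (hJ0 : 0 < J 0) (hJint : ∫ x, J x = 1) (hJsupp : HasCompactSupport J) (c : ℝ)
    (ν₀ ν₁ : ℝ)
    (h₀ : ∀ ν : ℝ, (∫ x, J x * Real.exp (-ν₀ * x)) + c * ν₀
        ≤ (∫ x, J x * Real.exp (-ν * x)) + c * ν)
    (h₁ : ∀ ν : ℝ, (∫ x, J x * Real.exp (-ν₁ * x)) + c * ν₁
        ≤ (∫ x, J x * Real.exp (-ν * x)) + c * ν) :
    ν₀ = ν₁ := by
  by_contra hne
  set μ : ℝ := (ν₀ + ν₁) / 2 with hμ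
  have hint : ∀ ν : ℝ, Integrable (fun x => J x * Real.exp (-ν * x)) := by
    intro ν
    exact (hJcont.mul (by continuity)).integrable_of_hasCompactSupport hJsupp.mul_right
  -- find x₀ ≠ 0 with J x₀ > 0
  obtain ⟨ε, hε, hball⟩ : ∃ ε > 0, Metric.ball (0:ℝ) ε ⊆ {x | 0 < J x} := by
    have hopen : IsOpen {x | 0 < J x} := isOpen_lt continuous_const hJcont
    exact Metric.isOpen_iff.1 hopen 0 hJ0
  set x₀ : ℝ := ε / 2 with hx₀
  have hx₀ne : x₀ ≠ 0 := by positivity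
  have hJx₀ : 0 < J x₀ := hball (by
    simp only [Metric.mem_ball, Real.dist_eq, sub_zero, hx₀]
    rw [abs_of_pos (half_pos hε)]; linarith)
  -- the convexity gap function
  set f : ℝ → ℝ := fun x =>
    J x * (Real.exp (-ν₀ * x) / 2 + Real.exp (-ν₁ * x) / 2 - Real.exp (-μ * x)) with hf
  have hgap : ∀ x, Real.exp (-μ * x) ≤ Real.exp (-ν₀ * x) / 2 + Real.exp (-ν₁ * x) / 2 := by
    intro x
    have := convexOn_exp.2 (Set.mem_univ (-ν₀ * x)) (Set.mem_univ (-ν₁ * x))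
      (by norm_num : (0:ℝ) ≤ 1/2) (by norm_num : (0:ℝ) ≤ 1/2) (by norm_num)
    simp only [smul_eq_mul] at this
    calc Real.exp (-μ * x) = Real.exp (1/2 * (-ν₀ * x) + 1/2 * (-ν₁ * x)) := by rw [hμ]; congr 1; ring
      _ ≤ 1/2 * Real.exp (-ν₀ * x) + 1/2 * Real.exp (-ν₁ * x) := this
      _ = Real.exp (-ν₀ * x) / 2 + Real.exp (-ν₁ * x) / 2 := by ring
  have hfnonneg : ∀ x, 0 ≤ f x := fun x =>
    mul_nonneg (hJnonneg x) (by linarith [hgap x])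
  have hfx₀ : 0 < f x₀ := by
    have hab : (-ν₀ * x₀) ≠ (-ν₁ * x₀) := by
      intro h
      have h' : ν₀ * x₀ = ν₁ * x₀ := by linarith
      exact hne (mul_right_cancel₀ hx₀ne h')
    have := strictConvexOn_exp.2 (Set.mem_univ (-ν₀ * x₀)) (Set.mem_univ (-ν₁ * x₀)) hab
      (by norm_num : (0:ℝ) < 1/2) (by norm_num : (0:ℝ) < 1/2) (by norm_num)
    simp only [smul_eq_mul] at this
    have hlt : Real.exp (-μ * x₀) < Real.exp (-ν₀ * x₀) / 2 + Real.exp (-ν₁ * x₀) / 2 := by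
      calc Real.exp (-μ * x₀) = Real.exp (1/2 * (-ν₀ * x₀) + 1/2 * (-ν₁ * x₀)) := by rw [hμ]; congr 1; ring
        _ < 1/2 * Real.exp (-ν₀ * x₀) + 1/2 * Real.exp (-ν₁ * x₀) := this
        _ = Real.exp (-ν₀ * x₀) / 2 + Real.exp (-ν₁ * x₀) / 2 := by ring
    exact mul_pos hJx₀ (by linarith)
  have hfcont : Continuous f := by
    apply hJcont.mul
    continuity
  have hfint : Integrable f := hfcont.integrable_of_hasCompactSupport hJsupp.mul_right
  have hfpos : 0 < ∫ x, f x := by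
    rw [integral_pos_iff_support_of_nonneg hfnonneg hfint]
    have hopen : IsOpen (Function.support f) := hfcont.isOpen_support
    exact hopen.measure_pos volume ⟨x₀, ne_of_gt hfx₀⟩
  -- compute ∫ f
  have hsplit : ∫ x, f x = (∫ x, J x * Real.exp (-ν₀ * x)) / 2
      + (∫ x, J x * Real.exp (-ν₁ * x)) / 2 - ∫ x, J x * Real.exp (-μ * x) := by
    have h1 : f = fun x => (J x * Real.exp (-ν₀ * x)) / 2 + (J x * Real.exp (-ν₁ * x)) / 2
        - J x * Real.exp (-μ * x) := by
      funext x; simp only [hf]; ring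
    have hI : Integrable (fun x => J x * Real.exp (-ν₀ * x) / 2 + J x * Real.exp (-ν₁ * x) / 2) :=
      ((hint ν₀).div_const 2).add ((hint ν₁).div_const 2)
    rw [h1, integral_sub hI (hint μ),
      integral_add ((hint ν₀).div_const 2) ((hint ν₁).div_const 2),
      integral_div, integral_div]
  have hkey : ∫ x, J x * Real.exp (-μ * x)
      < (∫ x, J x * Real.exp (-ν₀ * x)) / 2 + (∫ x, J x * Real.exp (-ν₁ * x)) / 2 := by
    linarith [hfpos, hsplit.symm.le, hsplit.le]
  have heq : (∫ x, J x * Real.exp (-ν₀ * x)) + c * ν₀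
      = (∫ x, J x * Real.exp (-ν₁ * x)) + c * ν₁ := le_antisymm (h₀ ν₁) (h₁ ν₀)
  have h₀μ := h₀ μ
  have hcμ : c * μ = (c * ν₀ + c * ν₁) / 2 := by rw [hμ]; ring
  linarith
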